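/- Let d ≥ 1, let λ be a partition of n, let μ be a partition of n−d, and let β be the nonincreasing rearrangement of the composition (d, μ₁, …, μ_l). Suppose that (1) β is dominated by λ, i.e. β₁ + … + β_k ≤ λ₁ + … + λ_k for every k (treating missing parts as 0), and (2) n² − ∑_j ((λᵗ)_j)² ≤ [(n−d)² − ∑_j ((μᵗ)_j)²] + (2n−d)(d−1). Then λ = (d, μ₁, …, μ_l); in particular d ≥ μ₁. -/

import Mathlib

/-- The `j`-th part of the transpose (conjugate) partition of a partition `l`:
`(lᵗ)_j = #{i : lᵢ ≥ j}`. -/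
def conjPart (l : List ℕ) (j : ℕ) : ℕ := (l.filter (fun a => decide (j ≤ a))).length

lemma conjPart_perm {l l' : List ℕ} (h : l.Perm l') (j : ℕ) : conjPart l j = conjPart l' j :=
  (h.filter _).length_eq

lemma conjPart_cons (a : ℕ) (l : List ℕ) (j : ℕ) :
    conjPart (a :: l) j = conjPart l j + (if j ≤ a then 1 else 0) := by
  simp only [conjPart, List.filter_cons]
  split <;> simp_all

lemma ite_sum_Icc (M a : ℕ) (f : ℕ → ℕ) (ha : a ≤ M) :
    ∑ j ∈ Finset.Icc 1 M, (if j ≤ a then f j else 0) = ∑ j ∈ Finset.Icc 1 a, f j := by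
  rw [← Finset.sum_filter]
  congr 1
  ext x; simp only [Finset.mem_filter, Finset.mem_Icc]; omega

lemma sum_conjPart (M : ℕ) (l : List ℕ) (h : ∀ x ∈ l, x ≤ M) :
    ∑ j ∈ Finset.Icc 1 M, conjPart l j = l.sum := by
  induction l with
  | nil => simp [conjPart]
  | cons a t ih =>
    have ha : a ≤ M := h a (by simp)
    simp only [conjPart_cons, Finset.sum_add_distrib, List.sum_cons]
    rw [ih (fun x hx => h x (by simp [hx])), ite_sum_Icc M a (fun _ => 1) ha]
    simp [Nat.card_Icc]
    omega

/-- auxiliary sum-of-squares expansion -/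
lemma sum_sq_add (M a : ℕ) (f : ℕ → ℕ) (ha : a ≤ M) :
    ∑ j ∈ Finset.Icc 1 M, (f j + (if j ≤ a then 1 else 0)) ^ 2
      = ∑ j ∈ Finset.Icc 1 M, (f j) ^ 2 + (2 * ∑ j ∈ Finset.Icc 1 a, f j + a) := by
  have key : ∀ j, (f j + (if j ≤ a then 1 else 0)) ^ 2
      = (f j) ^ 2 + (2 * (if j ≤ a then f j else 0) + (if j ≤ a then 1 else 0)) := by
    intro j; split <;> ring
  simp only [key, Finset.sum_add_distrib]
  rw [← Finset.mul_sum, ite_sum_Icc M a _ ha, ite_sum_Icc M a (fun _ => 1) ha]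
  simp [Nat.card_Icc]

/-- weighted sum `∑ (2i+1) lᵢ` defined recursively -/
def wsum : List ℕ → ℕ
  | [] => 0
  | a :: t => a + 2 * t.sum + wsum t

lemma sum_sq_conjPart (M : ℕ) (l : List ℕ) (hs : l.Pairwise (· ≥ ·)) (h : ∀ x ∈ l, x ≤ M) :
    ∑ j ∈ Finset.Icc 1 M, (conjPart l j) ^ 2 = wsum l := by
  induction l with
  | nil => simp [conjPart, wsum]
  | cons a t ih =>
    have ha : a ≤ M := h a (by simp)
    have hta : ∀ x ∈ t, x ≤ a := fun x hx => (List.pairwise_cons.mp hs).1 x hx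
    simp only [conjPart_cons]
    rw [sum_sq_add M a _ ha, ih (List.pairwise_cons.mp hs).2 (fun x hx => h x (by simp [hx])),
      sum_conjPart a t hta]
    simp [wsum]
    ring

def P (l : List ℕ) (k : ℕ) : ℕ := ∑ i ∈ Finset.range k, l.getD i 0

lemma P_cons (a : ℕ) (t : List ℕ) (k : ℕ) : P (a :: t) (k + 1) = a + P t k := by
  simp only [P, Finset.sum_range_succ']
  simp [add_comm]

lemma P_of_le (l : List ℕ) (k : ℕ) (h : l.length ≤ k) : P l k = l.sum := by
  induction l generalizing k with
  | nil => simp [P]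
  | cons a t ih =>
    obtain ⟨m, rfl⟩ : ∃ m, k = m + 1 := ⟨k - 1, by simp at h; omega⟩
    rw [P_cons, ih m (by simp at h; omega)]
    simp

lemma sum_P_cons (a : ℕ) (t : List ℕ) (m : ℕ) :
    ∑ k ∈ Finset.range (m + 1), P (a :: t) k = m * a + ∑ k ∈ Finset.range m, P t k := by
  rw [Finset.sum_range_succ']
  simp only [P_cons]
  simp [Finset.sum_add_distrib, P, mul_comm]

lemma identityI (l : List ℕ) (N : ℕ) (h : l.length ≤ N) :
    wsum l + 2 * ∑ k ∈ Finset.range N, P l k + l.sum = 2 * N * l.sum := by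
  induction l generalizing N with
  | nil => simp [wsum, P]
  | cons a t ih =>
    obtain ⟨m, rfl⟩ : ∃ m, N = m + 1 := ⟨N - 1, by simp at h; omega⟩
    rw [sum_P_cons]
    have := ih m (by simp at h; omega)
    simp only [wsum, List.sum_cons]
    ring_nf
    ring_nf at this
    omega

lemma eq_of_getD_eq (l l' : List ℕ) (hl : ∀ x ∈ l, 0 < x) (hl' : ∀ x ∈ l', 0 < x)
    (h : ∀ i, l.getD i 0 = l'.getD i 0) : l = l' := by
  have hlen : l.length = l'.length := by
    by_contra hne
    rcases Nat.lt_or_ge l.length l'.length with hlt | hge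
    · have h1 := h l.length
      rw [List.getD_eq_default _ _ (le_refl _)] at h1
      have := hl' (l'.getD l.length 0) (by
        rw [List.getD_eq_getElem _ _ hlt]; exact List.getElem_mem _)
      omega
    · have hlt : l'.length < l.length := by omega
      have h1 := h l'.length
      rw [List.getD_eq_default l' _ (le_refl _)] at h1
      have := hl (l.getD l'.length 0) (by
        rw [List.getD_eq_getElem _ _ hlt]; exact List.getElem_mem _)
      omega
  apply List.ext_getElem hlen
  intro i h1 h2
  have := h i
  rwa [List.getD_eq_getElem _ _ h1, List.getD_eq_getElem _ _ h2] at this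

lemma dominance_main (lam β : List ℕ)
    (hlampos : ∀ x ∈ lam, 0 < x) (hβpos : ∀ x ∈ β, 0 < x)
    (hsum : lam.sum = β.sum)
    (hdom : ∀ k, P β k ≤ P lam k) :
    wsum lam ≤ wsum β ∧ (wsum β ≤ wsum lam → lam = β) := by
  set N := max lam.length β.length with hN
  have h1 := identityI lam N (le_max_left _ _)
  have h2 := identityI β N (le_max_right _ _)
  rw [hsum] at h1
  have hS : ∑ k ∈ Finset.range N, P β k ≤ ∑ k ∈ Finset.range N, P lam k :=
    Finset.sum_le_sum (fun k _ => hdom k)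
  constructor
  · omega
  · intro hw
    have hSeq : ∑ k ∈ Finset.range N, P lam k = ∑ k ∈ Finset.range N, P β k := by omega
    have hPeq : ∀ k ∈ Finset.range N, P β k = P lam k := by
      rw [← Finset.sum_eq_sum_iff_of_le (fun k _ => hdom k)]
      omega
    have hPall : ∀ k, P lam k = P β k := by
      intro k
      rcases Nat.lt_or_ge k N with hk | hk
      · exact (hPeq k (Finset.mem_range.mpr hk)).symm
      · rw [P_of_le lam k (le_trans (le_max_left _ _) hk),
          P_of_le β k (le_trans (le_max_right _ _) hk), hsum]
    apply eq_of_getD_eq lam β hlampos hβpos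
    intro i
    have e1 : P lam (i+1) = P lam i + lam.getD i 0 := by simp [P, Finset.sum_range_succ]
    have e2 : P β (i+1) = P β i + β.getD i 0 := by simp [P, Finset.sum_range_succ]
    have := hPall i; have := hPall (i+1)
    omega


/-- Let `d ≥ 1`, `λ` a partition of `n`, `μ` a partition of `n − d`,
and `β` the nonincreasing rearrangement of the composition `(d, μ₁, …, μ_l)`.
Assume (1) `β` is dominated by `λ` (`β₁+…+β_k ≤ λ₁+…+λ_k` for all `k`, missing parts
being `0`), and (2) `n² − ∑_j ((λᵗ)_j)² ≤ (n−d)² − ∑_j ((μᵗ)_j)² + (2n−d)(d−1)`.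
Then `λ = (d, μ₁, …, μ_l)`; in particular `d ≥ μ₁`. -/
theorem stmt_7 (n d : ℕ) (hd : 1 ≤ d) (hdn : d ≤ n)
    (lam μ β : List ℕ)
    (hlampos : ∀ x ∈ lam, 0 < x) (hlamsort : lam.Pairwise (· ≥ ·)) (hlamsum : lam.sum = n)
    (hμpos : ∀ x ∈ μ, 0 < x) (hμsort : μ.Pairwise (· ≥ ·)) (hμsum : μ.sum = n - d)
    (hβperm : (d :: μ).Perm β) (hβsort : β.Pairwise (· ≥ ·))
    (hdom : ∀ k : ℕ, ∑ i ∈ Finset.range k, β.getD i 0 ≤ ∑ i ∈ Finset.range k, lam.getD i 0)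
    (hdim : (n : ℤ) ^ 2 - ∑ j ∈ Finset.Icc 1 n, (conjPart lam j : ℤ) ^ 2
        ≤ ((n - d : ℕ) : ℤ) ^ 2 - ∑ j ∈ Finset.Icc 1 n, (conjPart μ j : ℤ) ^ 2
          + (2 * (n : ℤ) - d) * ((d : ℤ) - 1)) :
    lam = d :: μ := by
  -- basic facts
  have hβsum : β.sum = n := by
    rw [← hβperm.sum_eq]; simp; omega
  have hβpos : ∀ x ∈ β, 0 < x := by
    intro x hx
    rcases List.mem_cons.mp (hβperm.mem_iff.mpr hx) with h | h
    · omega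
    · exact hμpos x (by simpa using h)
  have hlamle : ∀ x ∈ lam, x ≤ n := fun x hx =>
    hlamsum ▸ List.single_le_sum (fun y _ => Nat.zero_le y) x hx
  have hμle : ∀ x ∈ μ, x ≤ n := fun x hx =>
    le_trans (hμsum ▸ List.single_le_sum (fun y _ => Nat.zero_le y) x hx) (by omega)
  have hβle : ∀ x ∈ β, x ≤ n := by
    intro x hx
    rcases List.mem_cons.mp (hβperm.mem_iff.mpr hx) with h | h
    · omega
    · exact hμle x (by simpa using h)
  -- ℕ versions of the conjugate-square sums
  set A := ∑ j ∈ Finset.Icc 1 n, (conjPart lam j) ^ 2 with hA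
  set B := ∑ j ∈ Finset.Icc 1 n, (conjPart β j) ^ 2 with hB
  set C := ∑ j ∈ Finset.Icc 1 n, (conjPart μ j) ^ 2 with hC
  set T := ∑ j ∈ Finset.Icc 1 d, conjPart μ j with hT
  -- B = C + 2T + d
  have hβconj : ∀ j, conjPart β j = conjPart μ j + (if j ≤ d then 1 else 0) := by
    intro j
    rw [conjPart_perm hβperm.symm j, conjPart_cons]
  have hBC : B = C + (2 * T + d) := by
    rw [hB]
    simp only [hβconj]
    exact sum_sq_add n d _ hdn
  -- T ≤ n - d
  have hTsum : T + ∑ j ∈ Finset.Ioc d n, conjPart μ j = n - d := by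
    have hfull : ∑ j ∈ Finset.Icc 1 n, conjPart μ j = n - d := by
      rw [sum_conjPart n μ hμle, hμsum]
    have h0 : Finset.Icc 1 n = Finset.Ioc 0 n := by
      ext x; simp [Finset.mem_Icc, Finset.mem_Ioc]; omega
    have h0' : Finset.Icc 1 d = Finset.Ioc 0 d := by
      ext x; simp [Finset.mem_Icc, Finset.mem_Ioc]; omega
    rw [hT, h0', ← hfull, h0]
    exact Finset.sum_Ioc_consecutive _ (Nat.zero_le d) hdn
  have hTle : T ≤ n - d := by omega
  -- A = wsum lam, B = wsum β
  have hAw : A = wsum lam := sum_sq_conjPart n lam hlamsort hlamle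
  have hBw : B = wsum β := sum_sq_conjPart n β hβsort hβle
  -- dominance
  have hdm := dominance_main lam β hlampos hβpos (by rw [hlamsum, hβsum]) hdom
  -- From hdim : C + 2n - d ≤ A  (in ℤ, then ℕ)
  have hCA : C + 2 * n ≤ A + d := by
    have hcast : ((n - d : ℕ) : ℤ) = (n : ℤ) - d := by
      push_cast [Nat.cast_sub hdn]; ring
    have hAc : ((A : ℕ) : ℤ) = ∑ j ∈ Finset.Icc 1 n, (conjPart lam j : ℤ) ^ 2 := by
      rw [hA]; push_cast; ring
    have hCc : ((C : ℕ) : ℤ) = ∑ j ∈ Finset.Icc 1 n, (conjPart μ j : ℤ) ^ 2 := by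
      rw [hC]; push_cast; ring
    rw [← hAc, ← hCc, hcast] at hdim
    have : (C : ℤ) + 2 * n ≤ (A : ℤ) + d := by nlinarith [hdim]
    exact_mod_cast this
  -- sandwich
  have hwle : wsum lam ≤ wsum β := hdm.1
  have hweq : wsum β ≤ wsum lam := by omega
  have hTeq : T = n - d := by omega
  -- all parts of μ are ≤ d
  have hrest : ∑ j ∈ Finset.Ioc d n, conjPart μ j = 0 := by omega
  have hμled : ∀ x ∈ μ, x ≤ d := by
    intro x hx
    by_contra hgt
    push_neg at hgt
    have hxn : x ≤ n := hμle x hx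
    have hmem : x ∈ Finset.Ioc d n := Finset.mem_Ioc.mpr ⟨hgt, hxn⟩
    have hzero : conjPart μ x = 0 :=
      (Finset.sum_eq_zero_iff.mp hrest) x hmem
    have : x ∈ μ.filter (fun a => decide (x ≤ a)) :=
      List.mem_filter.mpr ⟨hx, by simp⟩
    have hpos : 0 < conjPart μ x := List.length_pos_iff.mpr (fun hnil => by simp [hnil] at this)
    omega
  -- conclude
  have hsorted : (d :: μ).Pairwise (· ≥ ·) :=
    List.pairwise_cons.mpr ⟨fun b hb => hμled b hb, hμsort⟩
  have hβeq : β = d :: μ :=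
    (List.Perm.eq_of_pairwise' hsorted hβsort hβperm).symm
  rw [hdm.2 hweq, hβeq]
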